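/- Parity of the classical–quantum comparator: for every n ≥ 1 and every c : ℕ with c < 2^n, the permutation of Fin (2^n) × Bool defined by (a, z) ↦ (a, xor z (decide (c < a))) has sign (−1)^(2^n − 1 − c). In particular, for c = 2^n − 2 (and more generally whenever 2^n − 1 − c is odd) the classical–quantum comparator induces an odd permutation. -/

import Mathlib

/-- The action of the `n`-bit classical–quantum comparator with classical constant `c`:
it maps `(a, z)` to `(a, xor z (decide (c < a)))`. -/
def cqCmpFun (n c : ℕ) : Fin (2 ^ n) × Bool → Fin (2 ^ n) × Bool :=
  fun p => (p.1, xor p.2 (decide (c < (p.1 : ℕ))))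

theorem cqCmpFun_involutive (n c : ℕ) : Function.Involutive (cqCmpFun n c) := by
  rintro ⟨a, z⟩
  simp [cqCmpFun, Bool.xor_assoc]
  by_cases h : c < (a : ℕ) <;> simp [h]

/-- The `n`-bit classical–quantum comparator with classical constant `c`, as a
permutation of `Fin (2^n) × Bool`. -/
def cqCmp (n c : ℕ) : Equiv.Perm (Fin (2 ^ n) × Bool) := (cqCmpFun_involutive n c).toPerm _

lemma cqCmp_eq_prodCongrRight (n c : ℕ) :
    cqCmp n c = Equiv.prodCongrRight
      (fun a : Fin (2 ^ n) => if c < (a : ℕ) then Equiv.swap false true else 1) := by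
  ext ⟨a, z⟩
  · rfl
  · by_cases h : c < (a : ℕ) <;>
      simp [cqCmp, cqCmpFun, Function.Involutive.toPerm, h,
        Equiv.prodCongrRight] <;> cases z <;> simp [Equiv.swap_apply_def]

lemma cqCmp_sign_aux (n c : ℕ) (hc : c < 2 ^ n) :
    Equiv.Perm.sign (cqCmp n c) = (-1) ^ (2 ^ n - 1 - c) := by
  rw [cqCmp_eq_prodCongrRight, Equiv.Perm.sign_prodCongrRight]
  have : ∀ a : Fin (2 ^ n),
      Equiv.Perm.sign (if c < (a : ℕ) then Equiv.swap false true else 1)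
        = if c < (a : ℕ) then (-1 : ℤˣ) else 1 := by
    intro a; by_cases h : c < (a : ℕ) <;> simp [h]
  simp only [this]
  rw [Finset.prod_ite, Finset.prod_const, Finset.prod_const, one_pow, mul_one]
  congr 1
  have : Finset.univ.filter (fun a : Fin (2 ^ n) => c < (a : ℕ))
      = Finset.Ioi (⟨c, hc⟩ : Fin (2 ^ n)) := by
    ext a; simp [Fin.lt_def]
  rw [this, Fin.card_Ioi]

theorem cqCmp_sign (n : ℕ) (hn : 1 ≤ n) :
    (∀ c : ℕ, c < 2 ^ n → Equiv.Perm.sign (cqCmp n c) = (-1) ^ (2 ^ n - 1 - c)) ∧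
    Equiv.Perm.sign (cqCmp n (2 ^ n - 2)) = -1 := by
  constructor
  · exact fun c hc => cqCmp_sign_aux n c hc
  · have h2 : 2 ≤ 2 ^ n := by
      calc 2 = 2 ^ 1 := rfl
      _ ≤ 2 ^ n := Nat.pow_le_pow_right (by norm_num) hn
    have hc : 2 ^ n - 2 < 2 ^ n := by omega
    rw [cqCmp_sign_aux n _ hc]
    have : 2 ^ n - 1 - (2 ^ n - 2) = 1 := by omega
    rw [this, pow_one]
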